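/- Let p be any prime and let n ≥ 1 be an integer. Let (a_k)_{k≥0} be a sequence in ℚ_p such that ‖k · a_k‖_p ≤ 1 for every k ≥ 1 (i.e. the formal derivative ∑_{k≥1} k a_k t^{k-1} of the power series F(t) = ∑_{k≥0} a_k t^k has ℤ_p-coefficients). Suppose x, y ∈ ℚ_p are distinct points with ‖x‖_p ≤ p^{-n} and ‖y‖_p ≤ p^{-n}, and that there is some s ∈ ℚ_p such that ∑_{k≥0} a_k x^k and ∑_{k≥0} a_k y^k both converge with the same sum s. Then the derivative series ∑_{k≥1} k a_k x^{k-1} converges and ‖∑_{k≥1} k a_k x^{k-1}‖_p ≤ p^{1-n}. -/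

import Mathlib

open Finset IsUltrametricDist

/-- Norm of a `HasSum` limit is bounded by a uniform bound on the terms (ultrametric). -/
lemma norm_hasSum_le {p : ℕ} [Fact p.Prime] {f : ℕ → ℚ_[p]} {a : ℚ_[p]} {C : ℝ}
    (h : HasSum f a) (h0 : 0 ≤ C) (hC : ∀ i, ‖f i‖ ≤ C) : ‖a‖ ≤ C := by
  refine le_of_tendsto' (h.norm) ?_
  intro s
  exact norm_sum_le_of_forall_le_of_nonneg h0 (fun i _ => hC i)

/-- `‖(k : ℚ_p)‖⁻¹ ≤ k` for `k ≥ 1`. -/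
lemma inv_norm_natCast_le {p : ℕ} [Fact p.Prime] {k : ℕ} (hk : 1 ≤ k) :
    ‖(k : ℚ_[p])‖⁻¹ ≤ (k : ℝ) := by
  have hk0 : (k : ℚ_[p]) ≠ 0 := Nat.cast_ne_zero.mpr (by omega)
  rw [Padic.norm_eq_zpow_neg_valuation hk0, Padic.valuation_natCast, ← zpow_neg, neg_neg, zpow_natCast]
  have hdvd : p ^ padicValNat p k ∣ k := pow_padicValNat_dvd
  have hle : (p : ℕ) ^ padicValNat p k ≤ k := Nat.le_of_dvd (by omega) hdvd
  exact_mod_cast hle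

/-- Lemma 3.2 of the paper (two-zero form, any prime, including `p = 2`).
If the formal derivative of `F(t) = ∑_{k≥0} a_k t^k` has `ℤ_p`-coefficients and `F`
takes the same value at two distinct points `x ≠ y` of norm at most `p^{-n}`, then the
derivative series `∑_{k≥1} k a_k x^{k-1}` converges to a value of norm at most `p^{1-n}`. -/
theorem stmt_3 (p : ℕ) [Fact p.Prime] (n : ℕ) (hn : 1 ≤ n)
    (a : ℕ → ℚ_[p])
    (hint : ∀ k : ℕ, 1 ≤ k → ‖(k : ℚ_[p]) * a k‖ ≤ 1)
    (x y : ℚ_[p]) (hxy : x ≠ y)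
    (hx : ‖x‖ ≤ (p : ℝ) ^ (-(n : ℤ))) (hy : ‖y‖ ≤ (p : ℝ) ^ (-(n : ℤ)))
    (s : ℚ_[p])
    (hsx : HasSum (fun k : ℕ => a k * x ^ k) s)
    (hsy : HasSum (fun k : ℕ => a k * y ^ k) s) :
    ∃ d : ℚ_[p],
      HasSum (fun k : ℕ => ((k + 1 : ℕ) : ℚ_[p]) * a (k + 1) * x ^ k) d ∧
      ‖d‖ ≤ (p : ℝ) ^ ((1 : ℤ) - (n : ℤ)) := by
  have hp2 : 2 ≤ p := (Fact.out : p.Prime).two_le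
  have hp1R : (1 : ℝ) < p := by exact_mod_cast Nat.lt_of_lt_of_le one_lt_two hp2
  have hp0R : (0 : ℝ) < p := lt_trans one_pos hp1R
  set r : ℝ := (p : ℝ) ^ (-(n : ℤ)) with hr
  have hr0 : 0 ≤ r := le_of_lt (zpow_pos hp0R _)
  have hr1 : r < 1 := by
    rw [hr]
    apply zpow_lt_one_of_neg₀ hp1R
    simp; omega
  -- summability of the derivative series
  have hterm : ∀ k : ℕ, ‖((k + 1 : ℕ) : ℚ_[p]) * a (k + 1) * x ^ k‖ ≤ r ^ k := by
    intro k
    rw [norm_mul, norm_pow]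
    calc ‖((k + 1 : ℕ) : ℚ_[p]) * a (k + 1)‖ * ‖x‖ ^ k
        ≤ 1 * r ^ k := by
          apply mul_le_mul (hint (k + 1) (by omega)) (pow_le_pow_left₀ (norm_nonneg _) hx k)
            (pow_nonneg (norm_nonneg _) k) zero_le_one
      _ = r ^ k := one_mul _
  have hsummable : Summable (fun k : ℕ => ((k + 1 : ℕ) : ℚ_[p]) * a (k + 1) * x ^ k) :=
    Summable.of_norm_bounded (summable_geometric_of_lt_one hr0 hr1) hterm
  obtain ⟨d, hd⟩ := hsummable
  refine ⟨d, hd, ?_⟩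
  -- the shifted derivative series
  set g : ℕ → ℚ_[p] := fun k => (k : ℚ_[p]) * a k * x ^ (k - 1) with hg
  have hgd : HasSum g d := by
    have h1 : HasSum (fun k => g (k + 1)) d := by
      refine hd.congr_fun fun k => ?_
      simp [hg]
    rw [hasSum_nat_add_iff 1] at h1
    simpa [hg] using h1
  -- difference of the two value series sums to zero
  have h2 : HasSum (fun k : ℕ => a k * x ^ k - a k * y ^ k) 0 := by
    simpa using hsx.sub hsy
  -- define c
  set c : ℕ → ℚ_[p] :=
    fun k => a k * ∑ j ∈ range k, (x ^ (k - 1) - x ^ j * y ^ (k - 1 - j)) with hc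
  -- key identity: (x - y) * c k = (x - y) * g k - (a k * x ^ k - a k * y ^ k)
  have hkey : ∀ k : ℕ, (x - y) * c k = (x - y) * g k - (a k * x ^ k - a k * y ^ k) := by
    intro k
    have hgeo : (∑ i ∈ range k, x ^ i * y ^ (k - 1 - i)) * (x - y) = x ^ k - y ^ k :=
      geom_sum₂_mul x y k
    have hsum : ∑ j ∈ range k, (x ^ (k - 1) - x ^ j * y ^ (k - 1 - j))
        = (k : ℚ_[p]) * x ^ (k - 1) - ∑ j ∈ range k, x ^ j * y ^ (k - 1 - j) := by
      rw [Finset.sum_sub_distrib, Finset.sum_const, card_range, nsmul_eq_mul]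
    rw [hc]
    simp only [hsum, hg]
    have : a k * x ^ k - a k * y ^ k
        = a k * ((∑ i ∈ range k, x ^ i * y ^ (k - 1 - i)) * (x - y)) := by
      rw [hgeo]; ring
    rw [this]; ring
  -- HasSum c d
  have hcd : HasSum c d := by
    have h3 : HasSum (fun k => (x - y) * g k - (a k * x ^ k - a k * y ^ k)) ((x - y) * d - 0) :=
      (hgd.mul_left (x - y)).sub h2
    have h4 : HasSum (fun k => (x - y) * c k) ((x - y) * d) := by
      rw [sub_zero] at h3
      exact h3.congr_fun fun k => hkey k
    have hxy0 : (x - y) ≠ 0 := sub_ne_zero.mpr hxy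
    have h5 := h4.mul_left (x - y)⁻¹
    simpa [← mul_assoc, inv_mul_cancel₀ hxy0] using h5
  -- norm bound on c k
  have hcbound : ∀ k : ℕ, ‖c k‖ ≤ (p : ℝ) ^ ((1 : ℤ) - (n : ℤ)) := by
    intro k
    have hpow0 : (0 : ℝ) < (p : ℝ) ^ ((1 : ℤ) - (n : ℤ)) := zpow_pos hp0R _
    match k with
    | 0 => simp [hc]; positivity
    | 1 => simp [hc]; positivity
    | (m + 2) =>
      set k := m + 2 with hk
      -- each summand has norm ≤ r ^ (k - 1)
      have hsummand : ∀ j ∈ range k, ‖x ^ (k - 1) - x ^ j * y ^ (k - 1 - j)‖ ≤ r ^ (k - 1) := by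
        intro j hj
        rw [mem_range] at hj
        have h1 : ‖x ^ (k - 1)‖ ≤ r ^ (k - 1) := by
          rw [norm_pow]; exact pow_le_pow_left₀ (norm_nonneg _) hx _
        have h2 : ‖x ^ j * y ^ (k - 1 - j)‖ ≤ r ^ (k - 1) := by
          rw [norm_mul, norm_pow, norm_pow]
          have : r ^ j * r ^ (k - 1 - j) = r ^ (k - 1) := by
            rw [← pow_add]; congr 1; omega
          rw [← this]
          exact mul_le_mul (pow_le_pow_left₀ (norm_nonneg _) hx j)
            (pow_le_pow_left₀ (norm_nonneg _) hy _) (pow_nonneg (norm_nonneg _) _)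
            (pow_nonneg hr0 j)
        calc ‖x ^ (k - 1) - x ^ j * y ^ (k - 1 - j)‖
            = ‖x ^ (k - 1) + -(x ^ j * y ^ (k - 1 - j))‖ := by rw [sub_eq_add_neg]
          _ ≤ max ‖x ^ (k - 1)‖ ‖-(x ^ j * y ^ (k - 1 - j))‖ := Padic.nonarchimedean _ _
          _ ≤ r ^ (k - 1) := max_le h1 (by rwa [norm_neg])
      have hsumnorm : ‖∑ j ∈ range k, (x ^ (k - 1) - x ^ j * y ^ (k - 1 - j))‖ ≤ r ^ (k - 1) :=
        norm_sum_le_of_forall_le_of_nonneg (pow_nonneg hr0 _) hsummand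
      -- ‖a k‖ ≤ k
      have hak : ‖a k‖ ≤ (k : ℝ) := by
        have hk1 : 1 ≤ k := by omega
        have hkq : (k : ℚ_[p]) ≠ 0 := Nat.cast_ne_zero.mpr (by omega)
        have hknorm : ‖(k : ℚ_[p])‖ ≠ 0 := norm_ne_zero_iff.mpr hkq
        have := hint k hk1
        rw [norm_mul] at this
        have hpos : 0 < ‖(k : ℚ_[p])‖ := lt_of_le_of_ne (norm_nonneg _) (Ne.symm hknorm)
        have h6 : ‖a k‖ ≤ ‖(k : ℚ_[p])‖⁻¹ := by
          rw [← one_div, le_div_iff₀ hpos]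
          calc ‖a k‖ * ‖(k : ℚ_[p])‖ = ‖(k : ℚ_[p])‖ * ‖a k‖ := mul_comm _ _
            _ ≤ 1 := this
        exact h6.trans (inv_norm_natCast_le hk1)
      have hck : ‖c k‖ ≤ (k : ℝ) * r ^ (k - 1) := by
        rw [hc, norm_mul]
        exact mul_le_mul hak hsumnorm (norm_nonneg _) (Nat.cast_nonneg k)
      refine hck.trans ?_
      -- final numeric inequality: k * p^{-n(k-1)} ≤ p^{1-n}
      have hexp : r ^ (k - 1) = (p : ℝ) ^ (-(n : ℤ) * (k - 1 : ℕ)) := by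
        rw [hr, ← zpow_natCast ((p : ℝ) ^ (-(n : ℤ))) (k - 1), ← zpow_mul]
      rw [hexp]
      have hrw : ((1 : ℤ) - (n : ℤ)) = ((1 : ℤ) + (n : ℤ) * ((k : ℤ) - 2)) + (-(n : ℤ) * ((k : ℤ) - 1)) := by
        ring
      have hcast : (-(n : ℤ) * ((k - 1 : ℕ) : ℤ)) = -(n : ℤ) * ((k : ℤ) - 1) := by
        have : ((k - 1 : ℕ) : ℤ) = (k : ℤ) - 1 := by omega
        rw [this]
      rw [hrw, zpow_add₀ (ne_of_gt hp0R), ← hcast]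
      apply mul_le_mul_of_nonneg_right _ (le_of_lt (zpow_pos hp0R _))
      -- k ≤ p ^ (1 + n(k-2))
      have hkle : (k : ℝ) ≤ (2 : ℝ) ^ (k - 1) := by
        have := Nat.lt_two_pow_self (n := k - 1)
        have h7 : k ≤ 2 ^ (k - 1) := by omega
        calc (k : ℝ) ≤ ((2 ^ (k - 1) : ℕ) : ℝ) := by exact_mod_cast h7
          _ = (2 : ℝ) ^ (k - 1) := by push_cast; ring
      have h8 : (2 : ℝ) ^ (k - 1) ≤ (p : ℝ) ^ (k - 1) := by
        apply pow_le_pow_left₀ (by norm_num) (by exact_mod_cast hp2)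
      have hexple : ((k : ℤ) - 1) ≤ (1 : ℤ) + (n : ℤ) * ((k : ℤ) - 2) := by
        have hk2 : (2 : ℤ) ≤ (k : ℤ) := by exact_mod_cast (by omega : 2 ≤ k)
        nlinarith [hn, hk2]
      have h9 : (p : ℝ) ^ ((k : ℤ) - 1) ≤ (p : ℝ) ^ ((1 : ℤ) + (n : ℤ) * ((k : ℤ) - 2)) :=
        zpow_le_zpow_right₀ (le_of_lt hp1R) hexple
      have h10 : (p : ℝ) ^ (k - 1) = (p : ℝ) ^ ((k : ℤ) - 1) := by
        rw [← zpow_natCast]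
        congr 1
        omega
      calc (k : ℝ) ≤ (2 : ℝ) ^ (k - 1) := hkle
        _ ≤ (p : ℝ) ^ (k - 1) := h8
        _ = (p : ℝ) ^ ((k : ℤ) - 1) := h10
        _ ≤ (p : ℝ) ^ ((1 : ℤ) + (n : ℤ) * ((k : ℤ) - 2)) := h9
  exact norm_hasSum_le hcd (le_of_lt (zpow_pos hp0R _)) hcbound
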